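/- Let ρ̄, σ̄ ∈ M_n(ℂ) satisfy ρ̄σ̄ = σ̄ρ̄, set τ := ρ̄σ̄, and assume τ* = τ, τ² = τ and Tr(τ) = 1. Then for all α, γ ∈ M_n(ℂ) with αρ̄ = ρ̄α and γσ̄ = σ̄γ, one has Tr(τ · α · γ) = Tr(τ · α) · Tr(τ · γ). -/

import Mathlib

open Matrix

lemma key (n : ℕ) (τ : Matrix (Fin n) (Fin n) ℂ) (hH : τᴴ = τ) (h2 : τ * τ = τ)
    (htr : τ.trace = 1) (A B : Matrix (Fin n) (Fin n) ℂ) :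
    (τ * A * τ * B).trace = (τ * A).trace * (τ * B).trace := by
  have hHerm : τ.IsHermitian := hH
  set V : Matrix (Fin n) (Fin n) ℂ := (hHerm.eigenvectorUnitary : Matrix (Fin n) (Fin n) ℂ) with hV
  set d : Fin n → ℝ := hHerm.eigenvalues with hd
  set D : Matrix (Fin n) (Fin n) ℂ := diagonal (fun i => (d i : ℂ)) with hD
  have hspec : τ = V * D * star V := by
    exact hHerm.spectral_theorem
  have hVV : star V * V = 1 := by simp [hV]
  have hVV' : V * star V = 1 := by simp [hV]
  have cancel : ∀ M : Matrix (Fin n) (Fin n) ℂ, star V * (V * M * star V) * V = M := by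
    intro M
    calc star V * (V * M * star V) * V = (star V * V) * M * (star V * V) := by
          simp only [Matrix.mul_assoc]
      _ = M := by rw [hVV]; simp
  -- D is idempotent
  have hD2 : D * D = D := by
    have h2' := h2
    rw [hspec] at h2'
    have e1 : star V * ((V * D * star V) * (V * D * star V)) * V
        = star V * (V * D * star V) * V := by rw [h2']
    have e2 : star V * ((V * D * star V) * (V * D * star V)) * V = D * D := by
      calc star V * ((V * D * star V) * (V * D * star V)) * V
          = (star V * V) * D * (star V * V) * D * (star V * V) := by
            simp only [Matrix.mul_assoc]
        _ = D * D := by rw [hVV]; simp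
    rw [e2, cancel] at e1
    exact e1
  -- each eigenvalue is 0 or 1
  have hd01 : ∀ i, d i = 0 ∨ d i = 1 := by
    intro i
    have : ((d i : ℂ)) * (d i) = (d i) := by
      have := congr_fun (congr_fun hD2 i) i
      simpa [hD, diagonal_mul_diagonal, Matrix.diagonal_apply_eq] using this
    have hr : d i * d i = d i := by exact_mod_cast this
    have h0 : d i * (d i - 1) = 0 := by linear_combination hr
    rcases mul_eq_zero.mp h0 with h | h
    · exact Or.inl h
    · exact Or.inr (by linarith)
  -- trace of D is 1
  have htrD : ∑ i, d i = 1 := by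
    have h1 : D.trace = 1 := by
      have : τ.trace = D.trace := by
        rw [hspec, Matrix.trace_mul_cycle]; rw [hVV, Matrix.one_mul]
      rw [← this, htr]
    have : (↑(∑ i, d i) : ℂ) = 1 := by
      simpa [hD, Matrix.trace_diagonal] using h1
    exact_mod_cast this
  -- exactly one eigenvalue equals 1
  set S : Finset (Fin n) := Finset.univ.filter (fun i => d i = 1) with hS
  have hcard : (S.card : ℝ) = 1 := by
    rw [← htrD]
    rw [hS, ← Finset.sum_boole]
    exact Finset.sum_congr rfl (fun i _ => by rcases hd01 i with h | h <;> simp [h])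
  have hS1 : S.card = 1 := by exact_mod_cast hcard
  obtain ⟨k, hk⟩ := Finset.card_eq_one.mp hS1
  set e : Fin n → ℂ := fun i => if i = k then 1 else 0 with he
  have hdk : ∀ i, (d i : ℂ) = e i := by
    intro i
    by_cases h : i = k
    · have : k ∈ S := hk ▸ Finset.mem_singleton_self k
      rw [hS, Finset.mem_filter] at this
      simp [he, h, this.2]
    · have hiS : i ∉ S := by rw [hk]; simp [h]
      rw [hS, Finset.mem_filter] at hiS
      rcases hd01 i with h0 | h1
      · simp [he, h, h0]
      · exact absurd ⟨Finset.mem_univ i, h1⟩ hiS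
  have hDe : D = diagonal e := by
    rw [hD]; exact congrArg diagonal (funext hdk)
  -- trace formulas for the rank-one projector diagonal e
  have main2 : ∀ M : Matrix (Fin n) (Fin n) ℂ, (D * M).trace = M k k := by
    intro M
    rw [hDe]
    simp [Matrix.trace, Matrix.diag, Matrix.mul_apply, Matrix.diagonal_apply, he, ite_mul]
  have main : ∀ M N : Matrix (Fin n) (Fin n) ℂ,
      (D * M * D * N).trace = M k k * N k k := by
    intro M N
    rw [hDe]
    simp [Matrix.trace, Matrix.diag, Matrix.mul_apply, Matrix.diagonal_apply, he, ite_mul,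
      mul_ite, mul_assoc, Finset.mul_sum]
  set X : Matrix (Fin n) (Fin n) ℂ := star V * A * V with hX
  set Y : Matrix (Fin n) (Fin n) ℂ := star V * B * V with hY
  have t1 : (τ * A * τ * B).trace = (D * X * D * Y).trace := by
    rw [hspec]
    rw [show V * D * star V * A * (V * D * star V) * B
        = V * (D * X * D * (star V * B)) from by simp [hX, Matrix.mul_assoc]]
    rw [Matrix.trace_mul_comm]
    congr 1
    simp [hY, Matrix.mul_assoc]
  have t2 : (τ * A).trace = (D * X).trace := by
    rw [hspec]
    rw [show V * D * star V * A = V * (D * (star V * A)) from by simp [Matrix.mul_assoc]]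
    rw [Matrix.trace_mul_comm]
    congr 1
    simp [hX, Matrix.mul_assoc]
  have t3 : (τ * B).trace = (D * Y).trace := by
    rw [hspec]
    rw [show V * D * star V * B = V * (D * (star V * B)) from by simp [Matrix.mul_assoc]]
    rw [Matrix.trace_mul_comm]
    congr 1
    simp [hY, Matrix.mul_assoc]
  rw [t1, t2, t3, main, main2, main2]

theorem stmt4 (n : ℕ) (ρ σ : Matrix (Fin n) (Fin n) ℂ)
    (hcomm : ρ * σ = σ * ρ)
    (hτH : (ρ * σ)ᴴ = ρ * σ) (hτ2 : (ρ * σ) * (ρ * σ) = ρ * σ)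
    (htr : (ρ * σ).trace = 1) :
    ∀ α γ : Matrix (Fin n) (Fin n) ℂ, α * ρ = ρ * α → γ * σ = σ * γ →
      (ρ * σ * α * γ).trace = (ρ * σ * α).trace * (ρ * σ * γ).trace := by
  intro α γ hα hγ
  have hmain := key n (ρ * σ) hτH hτ2 htr α γ
  have hmat : ρ * σ * α * (ρ * σ) * γ = ρ * σ * α * ρ * γ * σ := by
    simp only [Matrix.mul_assoc]
    rw [← hγ]
  have hmat2 : σ * (ρ * σ * α * ρ * γ) = (ρ * σ) * ((ρ * σ) * (α * γ)) := by
    simp only [Matrix.mul_assoc]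
    rw [show α * (ρ * γ) = ρ * (α * γ) from by
      rw [← Matrix.mul_assoc, hα, Matrix.mul_assoc]]
    rw [show σ * (ρ * (σ * (ρ * (α * γ)))) = (σ * ρ) * ((σ * ρ) * (α * γ)) from by
      simp [Matrix.mul_assoc], ← hcomm]
    simp [Matrix.mul_assoc]
  have e1 : (ρ * σ) * ((ρ * σ) * (α * γ)) = ρ * σ * α * γ := by
    rw [← Matrix.mul_assoc, hτ2, ← Matrix.mul_assoc]
  have hswap : (ρ * σ * α * γ).trace = (ρ * σ * α * (ρ * σ) * γ).trace := by
    rw [hmat, Matrix.trace_mul_comm (ρ * σ * α * ρ * γ) σ, hmat2, e1]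
  rw [hswap, hmain]
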